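/- The category of 2-degenerate 3-computads has all binary products, and on 2-cells the product is the cartesian product of the 2-cell sets. -/
import Mathlib


open CategoryTheory

/-- A 2-degenerate 3-computad: a single 0-cell, no 1-cells, so the data is a set of
2-cells, a set of 3-cells, and boundary maps into the free commutative monoid
(multisets) on the 2-cells. -/
structure DegComputad where
  C2 : Type
  C3 : Type
  src : C3 → Multiset C2
  tgt : C3 → Multiset C2

/-- Morphisms of 2-degenerate 3-computads. -/
@[ext]
structure DegComputad.Hom (A B : DegComputad) where
  f2 : A.C2 → B.C2
  f3 : A.C3 → B.C3
  src_comm : ∀ e, B.src (f3 e) = Multiset.map f2 (A.src e)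
  tgt_comm : ∀ e, B.tgt (f3 e) = Multiset.map f2 (A.tgt e)

instance : Category DegComputad where
  Hom := DegComputad.Hom
  id A := ⟨id, id, by simp, by simp⟩
  comp f g := ⟨g.f2 ∘ f.f2, g.f3 ∘ f.f3,
    by intro e; simp [f.src_comm, g.src_comm, Multiset.map_map],
    by intro e; simp [f.tgt_comm, g.tgt_comm, Multiset.map_map]⟩

@[simp] lemma DegComputad.id_f2 (A : DegComputad) : (𝟙 A : A ⟶ A).f2 = id := rfl
@[simp] lemma DegComputad.id_f3 (A : DegComputad) : (𝟙 A : A ⟶ A).f3 = id := rfl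
@[simp] lemma DegComputad.comp_f2 {A B C : DegComputad} (f : A ⟶ B) (g : B ⟶ C) :
    (f ≫ g).f2 = g.f2 ∘ f.f2 := rfl
@[simp] lemma DegComputad.comp_f3 {A B C : DegComputad} (f : A ⟶ B) (g : B ⟶ C) :
    (f ≫ g).f3 = g.f3 ∘ f.f3 := rfl

open CategoryTheory.Limits

/-- The 3-cells of the product computad. -/
def ProdC3 (A B : DegComputad) : Type :=
  {x : A.C3 × B.C3 × Multiset (A.C2 × B.C2) × Multiset (A.C2 × B.C2) //
    x.2.2.1.map Prod.fst = A.src x.1 ∧ x.2.2.1.map Prod.snd = B.src x.2.1 ∧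
    x.2.2.2.map Prod.fst = A.tgt x.1 ∧ x.2.2.2.map Prod.snd = B.tgt x.2.1}

/-- The product computad. -/
def ProdComp (A B : DegComputad) : DegComputad :=
  ⟨A.C2 × B.C2, ProdC3 A B, fun x => x.1.2.2.1, fun x => x.1.2.2.2⟩

def projA (A B : DegComputad) : ProdComp A B ⟶ A :=
  ⟨Prod.fst, fun x => x.1.1, fun e => e.2.1.symm, fun e => e.2.2.2.1.symm⟩

def projB (A B : DegComputad) : ProdComp A B ⟶ B :=
  ⟨Prod.snd, fun x => x.1.2.1, fun e => e.2.2.1.symm, fun e => e.2.2.2.2.symm⟩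

def prodLift {X A B : DegComputad} (u : X ⟶ A) (v : X ⟶ B) : X ⟶ ProdComp A B where
  f2 x := (u.f2 x, v.f2 x)
  f3 e := ⟨(u.f3 e, v.f3 e, (X.src e).map (fun x => (u.f2 x, v.f2 x)),
      (X.tgt e).map (fun x => (u.f2 x, v.f2 x))),
    by simp [Multiset.map_map, u.src_comm, v.src_comm, u.tgt_comm, v.tgt_comm,
      Function.comp_def]⟩
  src_comm e := rfl
  tgt_comm e := rfl

@[simp] lemma prodLift_fst {X A B : DegComputad} (u : X ⟶ A) (v : X ⟶ B) :
    prodLift u v ≫ projA A B = u := by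
  apply DegComputad.Hom.ext <;> rfl

@[simp] lemma prodLift_snd {X A B : DegComputad} (u : X ⟶ A) (v : X ⟶ B) :
    prodLift u v ≫ projB A B = v := by
  apply DegComputad.Hom.ext <;> rfl

lemma prodLift_uniq {X A B : DegComputad} (u : X ⟶ A) (v : X ⟶ B)
    (m : X ⟶ ProdComp A B) (h1 : m ≫ projA A B = u) (h2 : m ≫ projB A B = v) :
    m = prodLift u v := by
  have hf2 : m.f2 = fun x => (u.f2 x, v.f2 x) := by
    funext x
    have e1 : (projA A B).f2 (m.f2 x) = u.f2 x := congrFun (congrArg DegComputad.Hom.f2 h1) x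
    have e2 : (projB A B).f2 (m.f2 x) = v.f2 x := congrFun (congrArg DegComputad.Hom.f2 h2) x
    exact Prod.ext e1 e2
  apply DegComputad.Hom.ext hf2
  funext e
  apply Subtype.ext
  have e1 : (m.f3 e).1.1 = u.f3 e := congrFun (congrArg DegComputad.Hom.f3 h1) e
  have e2 : (m.f3 e).1.2.1 = v.f3 e := congrFun (congrArg DegComputad.Hom.f3 h2) e
  have es : (m.f3 e).1.2.2.1 = (X.src e).map (fun x => (u.f2 x, v.f2 x)) := by
    have := m.src_comm e; rw [hf2] at this; exact this
  have et : (m.f3 e).1.2.2.2 = (X.tgt e).map (fun x => (u.f2 x, v.f2 x)) := by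
    have := m.tgt_comm e; rw [hf2] at this; exact this
  exact Prod.ext e1 (Prod.ext e2 (Prod.ext es et))

/-- The category of 2-degenerate 3-computads has all binary products, and on 2-cells
the product is the cartesian product of the 2-cell sets (via the projections). -/
theorem stmt2 (A B : DegComputad) :
    ∃ (P : DegComputad) (p : P ⟶ A) (q : P ⟶ B),
      Nonempty (IsLimit (BinaryFan.mk p q)) ∧
      Function.Bijective (fun x : P.C2 => (p.f2 x, q.f2 x)) := by
  refine ⟨ProdComp A B, projA A B, projB A B, ⟨BinaryFan.isLimitMk
    (fun t => prodLift t.fst t.snd) (fun t => prodLift_fst _ _) (fun t => prodLift_snd _ _)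
    (fun t m h1 h2 => prodLift_uniq _ _ m h1 h2)⟩, ?_, ?_⟩
  · intro a b h
    exact Prod.ext (congrArg Prod.fst h) (congrArg Prod.snd h)
  · intro y
    exact ⟨(y.1, y.2), rfl⟩
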